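/- arXiv:1506.02172 — 2 statements merged into one kernel-verified Lean document; each statement's English description precedes it below -/
import Mathlib

section
/- Let D be a principal ideal domain, p ∈ D prime, ℓ ≥ 1, R_ℓ = D/(p^ℓ), and A an n×n matrix over R_ℓ whose (p^ℓ)-minimal polynomial has degree d. Suppose f_1, …, f_m generate the null ideal N(A) = {f ∈ R_ℓ[X] : f(A) = 0} as an ideal of R_ℓ[X] and satisfy: (1) deg(f_1) < ⋯ < deg(f_m) = d; (2) f_i = p̄^{t_i}·g_i for monic g_i ∈ R_ℓ[X] and natural numbers t_1 > ⋯ > t_m (p̄ the class of p); (3) every f ∈ N(A) lies in Σ_{i: deg(f_i) ≤ deg(f)} f_i·R_ℓ[X]. Then the R_ℓ-module N(A)^{<d} = {f ∈ N(A) : deg(f) < d} equals Σ_{i=1}^{m−1} Σ_{t=1}^{s_i} (X^{t−1}·f_i)·R_ℓ, where s_i = deg(f_{i+1}) − deg(f_i). -/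
/-- `f(A) ∈ d·M_n(S)`, i.e. `f` belongs to the `(d)`-ideal `N_{(d)}(A)` of the matrix `A`. -/
def memNullDvd {S : Type*} [CommRing S] {n : ℕ} (A : Matrix (Fin n) (Fin n) S) (d : S)
    (f : Polynomial S) : Prop :=
  ∃ B : Matrix (Fin n) (Fin n) S, Polynomial.aeval A f = d • B

/-- `f` is a `(d)`-minimal polynomial of `A`: a monic polynomial in `N_{(d)}(A)` of minimal
degree among monic polynomials in `N_{(d)}(A)`. -/
def IsMinPolyMod {S : Type*} [CommRing S] {n : ℕ} (A : Matrix (Fin n) (Fin n) S) (d : S)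
    (f : Polynomial S) : Prop :=
  f.Monic ∧ memNullDvd A d f ∧
    ∀ g : Polynomial S, g.Monic → memNullDvd A d g → f.degree ≤ g.degree

theorem auxkey {R : Type*} [CommRing R] (π : R) {n : ℕ}
    (A : Matrix (Fin n) (Fin n) R) (d m : ℕ) (hm : 0 < m)
    (fs : Fin m → Polynomial R)
    (hnull : ∀ i, Polynomial.aeval A (fs i) = 0)
    (hmono : StrictMono fun i : Fin m => (fs i).natDegree)
    (hlast : (fs ⟨m - 1, by omega⟩).natDegree = d)
    (t : Fin m → ℕ) (g : Fin m → Polynomial R)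
    (hgm : ∀ i, (g i).Monic)
    (hfac : ∀ i, fs i = Polynomial.C (π ^ t i) * g i)
    (hanti : StrictAnti t)
    (hsupp : ∀ f : Polynomial R, Polynomial.aeval A f = 0 →
      ∃ c : Fin m → Polynomial R,
        f = ∑ i, fs i * c i ∧ ∀ i, f.natDegree < (fs i).natDegree → c i = 0) :
    ∀ f : Polynomial R,
      (Polynomial.aeval A f = 0 ∧ f.degree < (d : WithBot ℕ)) ↔
        ∃ r : Fin m → ℕ → R,
          f = ∑ i : Fin m,
            ∑ u ∈ Finset.range
              (if h : (i : ℕ) + 1 < m then (fs ⟨(i : ℕ) + 1, h⟩).natDegree - (fs i).natDegree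
                else 0),
              Polynomial.C (r i u) * (Polynomial.X ^ u * fs i) := by
  -- notation for the module of combinations
  set S : Fin m → ℕ := fun i =>
    if h : (i : ℕ) + 1 < m then (fs ⟨(i : ℕ) + 1, h⟩).natDegree - (fs i).natDegree else 0
    with hS
  set B : (Fin m → ℕ → R) → Polynomial R := fun r =>
    ∑ i : Fin m, ∑ u ∈ Finset.range (S i), Polynomial.C (r i u) * (Polynomial.X ^ u * fs i)
    with hB
  have hBadd : ∀ r₁ r₂, B (fun i u => r₁ i u + r₂ i u) = B r₁ + B r₂ := by
    intro r₁ r₂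
    simp only [hB, map_add, add_mul, Finset.sum_add_distrib]
  -- each generator of the module lies in N(A) and has degree < d
  have hdegS : ∀ i : Fin m, ∀ u < S i, (u : ℕ) + (fs i).natDegree < d := by
    intro i u hu
    by_cases h : (i : ℕ) + 1 < m
    · have h1 : u < (fs ⟨(i : ℕ) + 1, h⟩).natDegree - (fs i).natDegree := by
        simpa [hS, h] using hu
      have h2 : (fs ⟨(i : ℕ) + 1, h⟩).natDegree ≤ d := by
        rcases eq_or_lt_of_le (show (i : ℕ) + 1 ≤ m - 1 by omega) with he | hl
        · have hfe : (⟨(i : ℕ) + 1, h⟩ : Fin m) = ⟨m - 1, by omega⟩ := Fin.ext he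
          rw [← hlast, hfe]
        · rw [← hlast]
          exact le_of_lt (hmono (show (⟨(i : ℕ) + 1, h⟩ : Fin m) < ⟨m - 1, by omega⟩ from hl))
      omega
    · simp [hS, h] at hu
  -- backwards direction
  have hback : ∀ r, Polynomial.aeval A (B r) = 0 ∧ (B r).degree < (d : WithBot ℕ) := by
    intro r
    constructor
    · simp only [hB, map_sum, map_mul, hnull, mul_zero, Finset.sum_const_zero]
    · refine lt_of_le_of_lt (Polynomial.degree_sum_le _ _) ?_
      rw [Finset.sup_lt_iff (show (⊥ : WithBot ℕ) < ((d : ℕ) : WithBot ℕ) from WithBot.bot_lt_coe d)]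
      intro i _
      refine lt_of_le_of_lt (Polynomial.degree_sum_le _ _) ?_
      rw [Finset.sup_lt_iff (show (⊥ : WithBot ℕ) < ((d : ℕ) : WithBot ℕ) from WithBot.bot_lt_coe d)]
      intro u hu
      rw [Finset.mem_range] at hu
      by_cases hz : Polynomial.C (r i u) * (Polynomial.X ^ u * fs i) = 0
      · rw [hz, Polynomial.degree_zero]; exact WithBot.bot_lt_coe d
      · rw [Polynomial.degree_eq_natDegree hz]
        have hle : (Polynomial.C (r i u) * (Polynomial.X ^ u * fs i)).natDegree ≤
            u + (fs i).natDegree := by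
          refine le_trans (Polynomial.natDegree_C_mul_le _ _) ?_
          refine le_trans (Polynomial.natDegree_mul_le) ?_
          exact Nat.add_le_add_right (Polynomial.natDegree_X_pow_le _) _
        exact_mod_cast lt_of_le_of_lt hle (hdegS i u hu)
  -- the main (forward) direction, by strong induction on the degree
  have main : ∀ k : ℕ, ∀ f : Polynomial R, f.natDegree ≤ k → Polynomial.aeval A f = 0 →
      f.degree < (d : WithBot ℕ) → ∃ r, f = B r := by
    intro k
    induction k using Nat.strong_induction_on with
    | _ k IH =>
      intro f hk h0 hfd
      by_cases hf : f = 0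
      · exact ⟨0, by simp [hf, hB]⟩
      set k0 := f.natDegree with hk0
      have hk0d : k0 < d := (Polynomial.natDegree_lt_iff_degree_lt hf).mpr hfd
      obtain ⟨c, hc, hcz⟩ := hsupp f h0
      set T : Finset (Fin m) := Finset.univ.filter (fun i => (fs i).natDegree ≤ k0) with hT
      have hne : T.Nonempty := by
        by_contra hemp
        apply hf
        rw [hc]
        refine Finset.sum_eq_zero fun i _ => ?_
        have : c i = 0 := by
          apply hcz
          by_contra hle
          exact hemp ⟨i, by simp [hT]; omega⟩
        simp [this]
      set j := T.max' hne with hj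
      have hjk : (fs j).natDegree ≤ k0 := by
        have := T.max'_mem hne
        simpa [hT] using this
      have hmaxj : ∀ i : Fin m, (fs i).natDegree ≤ k0 → i ≤ j :=
        fun i hi => T.le_max' i (by simp [hT, hi])
      have hjm : (j : ℕ) < m - 1 := by
        by_contra hge
        have hlt := j.isLt
        have hje : j = (⟨m - 1, by omega⟩ : Fin m) := Fin.ext (by show (j : ℕ) = m - 1; omega)
        have hjd : (fs j).natDegree = d := by rw [hje]; exact hlast
        omega
      have hj1 : (j : ℕ) + 1 < m := by omega
      set j' : Fin m := ⟨(j : ℕ) + 1, hj1⟩ with hj'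
      have hj'k : k0 < (fs j').natDegree := by
        by_contra hle
        have h2 : j' ≤ j := hmaxj j' (by omega)
        have h3 : (j : ℕ) + 1 ≤ (j : ℕ) := h2
        omega
      -- the leading coefficient of f is divisible by π ^ t j
      set a : R := ∑ i : Fin m,
        (if (fs i).natDegree ≤ k0 then π ^ (t i - t j) * ((g i * c i).coeff k0) else 0) with haa
      have ha : f.coeff k0 = π ^ t j * a := by
        conv_lhs => rw [hc]
        rw [Polynomial.finset_sum_coeff, haa, Finset.mul_sum]
        refine Finset.sum_congr rfl fun i _ => ?_
        by_cases hi : (fs i).natDegree ≤ k0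
        · rw [if_pos hi]
          have hij : i ≤ j := hmaxj i hi
          have htij : t j ≤ t i := hanti.antitone hij
          rw [hfac i, mul_assoc, Polynomial.coeff_C_mul, ← mul_assoc, ← pow_add,
            Nat.add_sub_cancel' htij]
        · rw [if_neg hi, hcz i (by omega), mul_zero, Polynomial.coeff_zero, mul_zero]
      have hlc : f.coeff k0 ≠ 0 := by
        rw [hk0]
        exact Polynomial.leadingCoeff_ne_zero.mpr hf
      have hπ0 : π ^ t j ≠ 0 := fun h => hlc (by rw [ha, h, zero_mul])
      haveI : Nontrivial R := ⟨⟨π ^ t j, 0, hπ0⟩⟩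
      -- the leading coefficient of fs j
      have h1 : (fs j).coeff ((g j).natDegree) = π ^ t j := by
        rw [hfac j, Polynomial.coeff_C_mul, (hgm j).coeff_natDegree, mul_one]
      have hdegj : (fs j).natDegree = (g j).natDegree := by
        refine le_antisymm ?_ (Polynomial.le_natDegree_of_ne_zero (by rw [h1]; exact hπ0))
        rw [hfac j]
        exact Polynomial.natDegree_C_mul_le _ _
      have hlead : (fs j).coeff ((fs j).natDegree) = π ^ t j := by rw [hdegj]; exact h1
      set u : ℕ := k0 - (fs j).natDegree with hu
      set term : Polynomial R := Polynomial.C a * (Polynomial.X ^ u * fs j) with hterm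
      have htermc : term.coeff k0 = a * π ^ t j := by
        rw [hterm, Polynomial.coeff_C_mul]
        have hksplit : k0 = (fs j).natDegree + u := by omega
        rw [hksplit, Polynomial.coeff_X_pow_mul, hlead]
      have htermdeg : term.natDegree ≤ k0 := by
        rw [hterm]
        refine le_trans (Polynomial.natDegree_C_mul_le _ _) ?_
        refine le_trans (Polynomial.natDegree_mul_le) ?_
        refine le_trans (Nat.add_le_add_right (Polynomial.natDegree_X_pow_le _) _) ?_
        omega
      set f' : Polynomial R := f - term with hf'
      have hf'deg : f'.degree < (k0 : WithBot ℕ) := by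
        rw [Polynomial.degree_lt_iff_coeff_zero]
        intro m' hm'
        rw [hf', Polynomial.coeff_sub]
        rcases eq_or_lt_of_le hm' with he | hlt
        · rw [← he, ha, htermc, mul_comm, sub_self]
        · rw [Polynomial.coeff_eq_zero_of_natDegree_lt (by omega),
            Polynomial.coeff_eq_zero_of_natDegree_lt (by omega), sub_self]
      have h0' : Polynomial.aeval A f' = 0 := by
        rw [hf', map_sub, h0, hterm, map_mul, map_mul, hnull j, mul_zero, mul_zero, sub_self]
      have hd' : f'.degree < (d : WithBot ℕ) :=
        lt_of_lt_of_le hf'deg (by exact_mod_cast hk0d.le)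
      obtain ⟨r', hr'⟩ : ∃ r', f' = B r' := by
        by_cases hf'0 : f' = 0
        · exact ⟨0, by simp [hf'0, hB]⟩
        · have hlt : f'.natDegree < k0 := (Polynomial.natDegree_lt_iff_degree_lt hf'0).mpr hf'deg
          exact IH f'.natDegree (by omega) f' le_rfl h0' hd'
      refine ⟨fun i' u' => r' i' u' + (if i' = j ∧ u' = u then a else 0), ?_⟩
      rw [hBadd, ← hr']
      have hdelta : B (fun i' u' => if i' = j ∧ u' = u then a else 0) = term := by
        simp only [hB]
        rw [Finset.sum_eq_single j]
        · have huS : u < S j := by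
            have : S j = (fs j').natDegree - (fs j).natDegree := by simp [hS, hj1, hj']
            omega
          rw [Finset.sum_eq_single u]
          · simp [hterm]
          · intro b _ hb
            simp [hb]
          · intro hnotin
            exact absurd (Finset.mem_range.mpr huS) hnotin
        · intro i _ hij
          refine Finset.sum_eq_zero fun u' _ => ?_
          simp [hij]
        · intro h; exact absurd (Finset.mem_univ j) h
      rw [hdelta, hf']
      ring
  -- finish
  intro f
  constructor
  · rintro ⟨h0, hfd⟩
    obtain ⟨r, hr⟩ := main f.natDegree f le_rfl h0 hfd
    exact ⟨r, hr⟩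
  · rintro ⟨r, rfl⟩
    exact hback r

/-- Let `R_ℓ = D/(p^ℓ)`, `A` a matrix over `R_ℓ` whose `(p^ℓ)`-minimal
polynomial has degree `d`, and `f_1, …, f_m` generators of the null ideal
`N(A) = {f : f(A) = 0}` of `A` satisfying conditions (1)–(3). Then the `R_ℓ`-module
`N(A)^{<d}` of elements of `N(A)` of degree `< d` equals
`Σ_{i=1}^{m−1} Σ_{t=1}^{s_i} (X^{t−1}·f_i)·R_ℓ` with `s_i = deg f_{i+1} − deg f_i`
(stated elementwise). -/
theorem stmt11 {D : Type*} [CommRing D] [IsDomain D] [IsPrincipalIdealRing D]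
    (p : D) (hp : Prime p) (ℓ : ℕ) (hℓ : 1 ≤ ℓ)
    {n : ℕ} (A : Matrix (Fin n) (Fin n) (D ⧸ Ideal.span {p ^ ℓ}))
    (d : ℕ) (νℓ : Polynomial (D ⧸ Ideal.span {p ^ ℓ}))
    (hνℓ : IsMinPolyMod A ((Ideal.Quotient.mk (Ideal.span {p ^ ℓ}) p) ^ ℓ) νℓ)
    (hd : νℓ.natDegree = d)
    (m : ℕ) (hm : 0 < m)
    (fs : Fin m → Polynomial (D ⧸ Ideal.span {p ^ ℓ}))
    -- `f_1, …, f_m` generate the null ideal `N(A)` of `A` as an ideal of `R_ℓ[X]`: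
    (hgen : ∀ f : Polynomial (D ⧸ Ideal.span {p ^ ℓ}),
      Polynomial.aeval A f = 0 ↔
        ∃ c : Fin m → Polynomial (D ⧸ Ideal.span {p ^ ℓ}), f = ∑ i, fs i * c i)
    -- (1) `deg f_1 < ⋯ < deg f_m = d`:
    (hmono : StrictMono fun i : Fin m => (fs i).natDegree)
    (hlast : (fs ⟨m - 1, by omega⟩).natDegree = d)
    -- (2) `f_i = p̄^{t_i}·g_i` with `g_i` monic and `t_1 > ⋯ > t_m`:
    (t : Fin m → ℕ) (g : Fin m → Polynomial (D ⧸ Ideal.span {p ^ ℓ}))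
    (hgm : ∀ i, (g i).Monic)
    (hfac : ∀ i, fs i = Polynomial.C ((Ideal.Quotient.mk (Ideal.span {p ^ ℓ}) p) ^ t i) * g i)
    (hanti : StrictAnti t)
    -- (3) every `f ∈ N(A)` lies in `Σ_{i : deg f_i ≤ deg f} f_i·R_ℓ[X]`:
    (hsupp : ∀ f : Polynomial (D ⧸ Ideal.span {p ^ ℓ}), Polynomial.aeval A f = 0 →
      ∃ c : Fin m → Polynomial (D ⧸ Ideal.span {p ^ ℓ}),
        f = ∑ i, fs i * c i ∧ ∀ i, f.natDegree < (fs i).natDegree → c i = 0) :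
    -- conclusion: `N(A)^{<d} = Σ_{i=1}^{m−1} Σ_{t=1}^{s_i} (X^{t−1} f_i)·R_ℓ`
    ∀ f : Polynomial (D ⧸ Ideal.span {p ^ ℓ}),
      (Polynomial.aeval A f = 0 ∧ f.degree < (d : WithBot ℕ)) ↔
        ∃ r : Fin m → ℕ → (D ⧸ Ideal.span {p ^ ℓ}),
          f = ∑ i : Fin m,
            ∑ u ∈ Finset.range
              (if h : (i : ℕ) + 1 < m then (fs ⟨(i : ℕ) + 1, h⟩).natDegree - (fs i).natDegree
                else 0),
              Polynomial.C (r i u) * (Polynomial.X ^ u * fs i) := by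
  have hnull : ∀ i, Polynomial.aeval A (fs i) = 0 := by
    intro i
    refine (hgen (fs i)).mpr ⟨fun i' => if i' = i then 1 else 0, ?_⟩
    simp [mul_ite, mul_one, mul_zero]
  exact auxkey (Ideal.Quotient.mk (Ideal.span {p ^ ℓ}) p) A d m hm fs hnull hmono hlast
    t g hgm hfac hanti hsupp
end

section
/- Let D be a principal ideal domain, p ∈ D prime, A an n×n matrix over D, ℓ ∈ ℕ, and let ν_j ∈ D[X] be (p^j)-minimal polynomials of A for 1 ≤ j ≤ ℓ. Write Ā_j for the image of A in M_n(D/(p^j)) and d_p for the p-degree of A. The following are equivalent: (1) N_{(p^ℓ)}(A) = ν_ℓ·D[X] + p^ℓ·D[X]; (2) N_{(p^j)}(A) = ν_j·D[X] + p^j·D[X] for all 1 ≤ j ≤ ℓ; (3) (D/(p^j))[Ā_j] ≅ (D/(p^j))^{d_p} as D/(p^j)-modules for all 1 ≤ j ≤ ℓ; (4) deg(ν_ℓ) = d_p; (5) ν_ℓ is a (p^j)-minimal polynomial of A for all 1 ≤ j ≤ ℓ. -/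
open Polynomial Matrix

section Basic

variable {D : Type*} [CommRing D] {n : ℕ} {A : Matrix (Fin n) (Fin n) D} {d : D}
  {f g : Polynomial D}

theorem memNullDvd_iff_dvd :
    memNullDvd A d f ↔ ∀ i k, d ∣ (Polynomial.aeval A f) i k := by
  constructor
  · rintro ⟨B, hB⟩ i k
    exact ⟨B i k, by simp [hB, Matrix.smul_apply, smul_eq_mul]⟩
  · intro h
    refine ⟨Matrix.of fun i k => (h i k).choose, ?_⟩
    ext i k
    simpa [smul_eq_mul] using (h i k).choose_spec

theorem memNullDvd.add (hf : memNullDvd A d f) (hg : memNullDvd A d g) :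
    memNullDvd A d (f + g) := by
  obtain ⟨B, hB⟩ := hf; obtain ⟨C, hC⟩ := hg
  exact ⟨B + C, by simp [hB, hC, smul_add]⟩

theorem memNullDvd.mul_right (hf : memNullDvd A d f) (g : Polynomial D) :
    memNullDvd A d (f * g) := by
  obtain ⟨B, hB⟩ := hf
  exact ⟨B * Polynomial.aeval A g, by rw [_root_.map_mul, hB, Matrix.smul_mul]⟩

theorem memNullDvd_C_mul (e : D) (h : d ∣ e) (g : Polynomial D) :
    memNullDvd A d (Polynomial.C e * g) := by
  obtain ⟨c, rfl⟩ := h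
  exact ⟨c • Polynomial.aeval A g, by
    rw [_root_.map_mul, aeval_C, Algebra.smul_def, _root_.map_mul, Algebra.smul_def, mul_assoc]⟩

theorem memNullDvd.of_dvd {d' : D} (h : d' ∣ d) (hf : memNullDvd A d f) :
    memNullDvd A d' f := by
  rw [memNullDvd_iff_dvd] at hf ⊢
  exact fun i k => dvd_trans h (hf i k)

theorem memNullDvd.sub (hf : memNullDvd A d f) (hg : memNullDvd A d g) :
    memNullDvd A d (f - g) := by
  obtain ⟨B, hB⟩ := hf; obtain ⟨C, hC⟩ := hg
  exact ⟨B - C, by simp [hB, hC, smul_sub]⟩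

theorem algebraMap_matrix_comp (σ : D →+* D) : True := trivial

theorem memNullDvd_iff_aeval_eq_zero :
    memNullDvd A d f ↔
      Polynomial.aeval (A.map (Ideal.Quotient.mk (Ideal.span {d})))
        (f.map (Ideal.Quotient.mk (Ideal.span {d}))) = 0 := by
  set σ := Ideal.Quotient.mk (Ideal.span {d})
  set Φ : Matrix (Fin n) (Fin n) D →+* Matrix (Fin n) (Fin n) (D ⧸ Ideal.span {d}) :=
    (σ : D →+* D ⧸ Ideal.span {d}).mapMatrix
  have key : Polynomial.aeval (A.map σ) (f.map σ) = Φ (Polynomial.aeval A f) := by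
    rw [aeval_def, eval₂_map, aeval_def, Polynomial.hom_eval₂]
    congr 1
    refine RingHom.ext fun x => ?_
    simp only [Φ, RingHom.comp_apply, Matrix.algebraMap_eq_diagonal, RingHom.mapMatrix_apply]
    refine Matrix.ext fun i k => ?_
    simp only [Matrix.diagonal_apply, Matrix.map_apply, Pi.algebraMap_apply,
      Algebra.algebraMap_self, RingHom.id_apply]
    split <;> simp
  rw [memNullDvd_iff_dvd, key]
  constructor
  · intro h
    ext i k
    simp only [Φ, RingHom.mapMatrix_apply, Matrix.map_apply, Matrix.zero_apply]
    rw [Ideal.Quotient.eq_zero_iff_mem, Ideal.mem_span_singleton]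
    exact h i k
  · intro h i k
    have h2 : Φ (Polynomial.aeval A f) i k = 0 := by rw [h]; rfl
    simp only [Φ, RingHom.mapMatrix_apply, Matrix.map_apply] at h2
    rwa [Ideal.Quotient.eq_zero_iff_mem, Ideal.mem_span_singleton] at h2

end Basic

section PID

variable {D : Type*} [CommRing D] [IsDomain D] [IsPrincipalIdealRing D]
  {p : D} {n : ℕ} {A : Matrix (Fin n) (Fin n) D} {ν1 : Polynomial D}

theorem map_mk_eq_zero_iff (I : Ideal D) (r : Polynomial D) :
    r.map (Ideal.Quotient.mk I) = 0 ↔ ∀ i, r.coeff i ∈ I := by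
  simp [Polynomial.ext_iff, coeff_map, Ideal.Quotient.eq_zero_iff_mem]

theorem deg_ge_of_mod_p (hp : Prime p) (hν1 : IsMinPolyMod A p ν1)
    (s : Polynomial D) (hs : memNullDvd A p s)
    (hns : s.map (Ideal.Quotient.mk (Ideal.span {p})) ≠ 0) :
    ν1.natDegree ≤ (s.map (Ideal.Quotient.mk (Ideal.span {p}))).natDegree := by
  haveI : (Ideal.span {p} : Ideal D).IsMaximal :=
    PrincipalIdealRing.isMaximal_of_irreducible hp.irreducible
  letI : Field (D ⧸ Ideal.span {p}) := Ideal.Quotient.field _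
  set σ := Ideal.Quotient.mk (Ideal.span {p})
  set sbar := s.map σ with hsbar
  have hmonic : (sbar * Polynomial.C sbar.leadingCoeff⁻¹).Monic :=
    monic_mul_leadingCoeff_inv hns
  have hlift : sbar * Polynomial.C sbar.leadingCoeff⁻¹ ∈ Polynomial.lifts σ := by
    obtain ⟨q, hq⟩ := Polynomial.map_surjective σ Ideal.Quotient.mk_surjective
      (sbar * Polynomial.C sbar.leadingCoeff⁻¹)
    exact ⟨q, hq⟩
  obtain ⟨t, ht, htdeg, htm⟩ := Polynomial.lifts_and_degree_eq_and_monic hlift hmonic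
  have htmem : memNullDvd A p t := by
    rw [memNullDvd_iff_aeval_eq_zero] at hs ⊢
    rw [ht, _root_.map_mul]
    exact mul_eq_zero_of_left (by rw [hsbar]; exact hs) _
  have hd := hν1.2.2 t htm htmem
  rw [htdeg, degree_mul_leadingCoeff_inv _ hns] at hd
  exact natDegree_le_natDegree hd

theorem key_deg (hp : Prime p) (hν1 : IsMinPolyMod A p ν1) :
    ∀ j, 1 ≤ j → ∀ r : Polynomial D, memNullDvd A (p ^ j) r →
      r.map (Ideal.Quotient.mk (Ideal.span {p ^ j})) ≠ 0 →
      ν1.natDegree ≤ (r.map (Ideal.Quotient.mk (Ideal.span {p ^ j}))).natDegree := by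
  intro j
  induction j with
  | zero => omega
  | succ j ih =>
    intro _ r hr hrn
    by_cases hall : ∀ i, p ∣ r.coeff i
    · -- r = C p * s
      obtain ⟨s, rfl⟩ := (Polynomial.C_dvd_iff_dvd_coeff p r).2 hall
      rcases Nat.eq_zero_or_pos j with hj | hj
      · subst hj
        exact absurd ((map_mk_eq_zero_iff _ _).2 fun i => by
          rw [pow_one, Ideal.mem_span_singleton]
          simpa using Dvd.dvd.mul_right (dvd_refl p) (s.coeff i)) hrn
      · have hsmem : memNullDvd A (p ^ j) s := by
          rw [memNullDvd_iff_dvd] at hr ⊢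
          intro i k
          have hent : (Polynomial.aeval A (Polynomial.C p * s)) i k
              = p * (Polynomial.aeval A s) i k := by
            rw [_root_.map_mul, aeval_C, ← Algebra.smul_def]
            simp [Matrix.smul_apply, smul_eq_mul]
          have h2 : p * p ^ j ∣ p * ((Polynomial.aeval A s) i k) := by
            rw [← pow_succ', ← hent]
            exact hr i k
          exact (mul_dvd_mul_iff_left hp.ne_zero).1 h2
        have hsn : s.map (Ideal.Quotient.mk (Ideal.span {p ^ j})) ≠ 0 := by
          intro h0
          apply hrn
          rw [map_mk_eq_zero_iff] at h0 ⊢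
          intro i
          rw [Ideal.mem_span_singleton]
          rw [coeff_C_mul]
          obtain ⟨c, hc⟩ := Ideal.mem_span_singleton.1 (h0 i)
          exact ⟨c, by rw [hc, pow_succ', mul_assoc]⟩
        have hkey := ih hj s hsmem hsn
        refine le_trans hkey (Polynomial.le_natDegree_of_ne_zero ?_)
        set m := (s.map (Ideal.Quotient.mk (Ideal.span {p ^ j}))).natDegree
        have hsm : s.coeff m ∉ Ideal.span {p ^ j} := by
          intro hmem
          have : (s.map (Ideal.Quotient.mk (Ideal.span {p ^ j}))).coeff m = 0 := by
            rw [coeff_map, Ideal.Quotient.eq_zero_iff_mem]; exact hmem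
          exact Polynomial.leadingCoeff_ne_zero.2 hsn this
        rw [coeff_map, Ne, Ideal.Quotient.eq_zero_iff_mem, Ideal.mem_span_singleton]
        intro hdvd
        apply hsm
        rw [Ideal.mem_span_singleton]
        rw [coeff_C_mul] at hdvd
        obtain ⟨c, hc⟩ := hdvd
        rw [pow_succ'] at hc
        exact ⟨c, mul_left_cancel₀ hp.ne_zero (hc.trans (mul_assoc p (p ^ j) c))⟩
    · push_neg at hall
      obtain ⟨i0, hi0⟩ := hall
      have hr1 : memNullDvd A p r := hr.of_dvd (dvd_pow_self p (Nat.succ_ne_zero j))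
      have hrn1 : r.map (Ideal.Quotient.mk (Ideal.span {p})) ≠ 0 := by
        intro h0
        exact hi0 (Ideal.mem_span_singleton.1 ((map_mk_eq_zero_iff _ _).1 h0 i0))
      refine le_trans (deg_ge_of_mod_p hp hν1 r hr1 hrn1) (Polynomial.le_natDegree_of_ne_zero ?_)
      set m := (r.map (Ideal.Quotient.mk (Ideal.span {p}))).natDegree
      have : r.coeff m ∉ Ideal.span {p} := by
        intro hmem
        have : (r.map (Ideal.Quotient.mk (Ideal.span {p}))).coeff m = 0 := by
          rw [coeff_map, Ideal.Quotient.eq_zero_iff_mem]; exact hmem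
        exact Polynomial.leadingCoeff_ne_zero.2 hrn1 this
      rw [coeff_map, Ne, Ideal.Quotient.eq_zero_iff_mem, Ideal.mem_span_singleton]
      intro hdvd
      exact this (Ideal.mem_span_singleton.2 (dvd_trans (dvd_pow_self p (Nat.succ_ne_zero j)) hdvd))

end PID

section PID2

variable {D : Type*} [CommRing D] [IsDomain D] [IsPrincipalIdealRing D]
  {p : D} {n : ℕ} {A : Matrix (Fin n) (Fin n) D} {ν1 : Polynomial D}

theorem null_eq_of_deg (hp : Prime p) (hν1 : IsMinPolyMod A p ν1) {j : ℕ} (hj : 1 ≤ j)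
    {νj : Polynomial D} (hνj : IsMinPolyMod A (p ^ j) νj) (hdeg : νj.natDegree = ν1.natDegree) :
    ∀ f, memNullDvd A (p ^ j) f ↔
      ∃ g h : Polynomial D, f = νj * g + Polynomial.C (p ^ j) * h := by
  intro f
  constructor
  · intro hf
    set r := f %ₘ νj with hr
    have hfr : r + νj * (f /ₘ νj) = f := modByMonic_add_div f νj
    have hrmem : memNullDvd A (p ^ j) r := by
      have := hf.sub (hνj.2.1.mul_right (f /ₘ νj))
      have heq : f - νj * (f /ₘ νj) = r := by linear_combination -hfr
      rwa [heq] at this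
    have hrzero : r.map (Ideal.Quotient.mk (Ideal.span {p ^ j})) = 0 := by
      by_contra hne
      have hkey := key_deg hp hν1 j hj r hrmem hne
      have hrne : r ≠ 0 := fun h0 => hne (by rw [h0, Polynomial.map_zero])
      have hlt : r.natDegree < νj.natDegree :=
        natDegree_lt_natDegree hrne (degree_modByMonic_lt f hνj.1)
      have h2 : (r.map (Ideal.Quotient.mk (Ideal.span {p ^ j}))).natDegree ≤ r.natDegree :=
        natDegree_map_le
      omega
    rw [map_mk_eq_zero_iff] at hrzero
    have : Polynomial.C (p ^ j) ∣ r :=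
      (Polynomial.C_dvd_iff_dvd_coeff _ _).2 fun i =>
        Ideal.mem_span_singleton.1 (hrzero i)
    obtain ⟨h, hh⟩ := this
    exact ⟨f /ₘ νj, h, by linear_combination -hfr + hh⟩
  · rintro ⟨g, h, rfl⟩
    exact (hνj.2.1.mul_right g).add (memNullDvd_C_mul _ dvd_rfl h)

end PID2

section PID3

variable {D : Type*} [CommRing D] [IsDomain D] [IsPrincipalIdealRing D]
  {p : D} {n : ℕ} {A : Matrix (Fin n) (Fin n) D} {ν1 : Polynomial D}

theorem isUnit_mk_of_not_dvd (hp : Prime p) (j : ℕ) {x : D} (hx : ¬ p ∣ x) :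
    IsUnit (Ideal.Quotient.mk (Ideal.span {p ^ j}) x) := by
  have hcop : IsCoprime (p ^ j) x := ((hp.coprime_iff_not_dvd).2 hx).pow_left
  obtain ⟨u, v, huv⟩ := hcop
  refine IsUnit.of_mul_eq_one (Ideal.Quotient.mk _ v) ?_
  have h1 : Ideal.Quotient.mk (Ideal.span {p ^ j}) (u * p ^ j) = 0 := by
    rw [Ideal.Quotient.eq_zero_iff_mem]
    exact Ideal.mul_mem_left _ u (Ideal.subset_span rfl)
  have h2 := congrArg (Ideal.Quotient.mk (Ideal.span {p ^ j})) huv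
  rw [map_add, _root_.map_one, h1, zero_add, _root_.map_mul] at h2
  rw [mul_comm]
  exact h2

theorem nontrivial_quot (hp : Prime p) {j : ℕ} (hj : 1 ≤ j) :
    Nontrivial (D ⧸ Ideal.span {p ^ j}) := by
  refine Ideal.Quotient.nontrivial_iff.mpr ?_
  rw [Ne, Ideal.span_singleton_eq_top]
  exact fun h => hp.not_isUnit (isUnit_of_dvd_unit (dvd_pow_self p (by omega)) h)

theorem pow_mem_adjoin (R : Type*) [CommRing R] (B : Matrix (Fin n) (Fin n) R) (k : ℕ) :
    B ^ k ∈ Algebra.adjoin R {B} :=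
  Subalgebra.pow_mem _ (Algebra.self_mem_adjoin_singleton R B) k

theorem equiv_of_deg (hp : Prime p) {j : ℕ} (hj : 1 ≤ j)
    {νj : Polynomial D} (hνj : IsMinPolyMod A (p ^ j) νj)
    (hν1 : IsMinPolyMod A p ν1) (hdeg : νj.natDegree = ν1.natDegree) :
    Nonempty ((Algebra.adjoin (D ⧸ Ideal.span {p ^ j})
        {A.map (Ideal.Quotient.mk (Ideal.span {p ^ j}))})
      ≃ₗ[D ⧸ Ideal.span {p ^ j}]
        (Fin ν1.natDegree → (D ⧸ Ideal.span {p ^ j}))) := by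
  haveI : Nontrivial (D ⧸ Ideal.span {p ^ j}) := nontrivial_quot hp hj
  set R := D ⧸ Ideal.span {p ^ j}
  set σ := Ideal.Quotient.mk (Ideal.span {p ^ j}) with hσ
  set Ab := A.map σ with hAb
  set dp := ν1.natDegree with hdpdef
  set S := Algebra.adjoin R {Ab} with hS
  set Ψ : (Fin dp → R) →ₗ[R] Matrix (Fin n) (Fin n) R :=
    Fintype.linearCombination R (fun i : Fin dp => Ab ^ (i : ℕ)) with hΨ
  have hΨapply : ∀ c, Ψ c = ∑ i : Fin dp, c i • Ab ^ (i : ℕ) := fun c =>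
    Fintype.linearCombination_apply R _ c
  have hmem : ∀ c, Ψ c ∈ Subalgebra.toSubmodule S := by
    intro c
    rw [hΨapply]
    exact Submodule.sum_mem _ fun i _ => Submodule.smul_mem _ _ (by
      rw [Subalgebra.mem_toSubmodule]; exact pow_mem_adjoin R Ab (i : ℕ))
  set Φ : (Fin dp → R) →ₗ[R] Subalgebra.toSubmodule S :=
    Ψ.codRestrict (Subalgebra.toSubmodule S) hmem with hΦ
  -- injectivity
  have hker : ∀ c : Fin dp → R, Ψ c = 0 → c = 0 := by
    intro c hc
    -- lift the coefficients
    have hlift : ∀ i : Fin dp, ∃ y : D, σ y = c i := fun i =>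
      Ideal.Quotient.mk_surjective (c i)
    choose c' hc' using hlift
    set r : Polynomial D := ∑ i : Fin dp, Polynomial.C (c' i) * Polynomial.X ^ (i : ℕ)
      with hrdef
    have hrmap : r.map σ = ∑ i : Fin dp, Polynomial.C (c i) * Polynomial.X ^ (i : ℕ) := by
      rw [hrdef, Polynomial.map_sum]
      exact Finset.sum_congr rfl fun i _ => by
        rw [Polynomial.map_mul, Polynomial.map_C, Polynomial.map_pow, Polynomial.map_X, hc']
    have haeval : Polynomial.aeval Ab (r.map σ) = 0 := by
      rw [hrmap, map_sum]
      rw [hΨapply] at hc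
      rw [← hc]
      exact Finset.sum_congr rfl fun i _ => by
        rw [_root_.map_mul, aeval_C, map_pow, aeval_X, Algebra.smul_def]
    have hmem2 : memNullDvd A (p ^ j) r := memNullDvd_iff_aeval_eq_zero.2 haeval
    have hcoeff : ∀ i : Fin dp, (r.map σ).coeff (i : ℕ) = c i := by
      intro i
      rw [hrmap, Polynomial.finset_sum_coeff]
      rw [Finset.sum_eq_single i]
      · simp
      · intro b _ hbi
        rw [Polynomial.coeff_C_mul, Polynomial.coeff_X_pow, if_neg (by
          simpa [Fin.val_eq_val] using Ne.symm hbi), mul_zero]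
      · simp
    have hrz : r.map σ = 0 := by
      by_contra hne
      have hkey := key_deg hp hν1 j hj r hmem2 hne
      have hdegle : (r.map σ).natDegree < dp := by
        have h1 : r.natDegree < dp := by
          rcases Nat.eq_zero_or_pos dp with h0 | h0
          · exfalso
            apply hne
            haveI : IsEmpty (Fin dp) := by rw [h0]; exact Fin.isEmpty'
            have hr0 : r = 0 := by rw [hrdef, Finset.univ_eq_empty, Finset.sum_empty]
            rw [hr0, Polynomial.map_zero]
          · refine lt_of_le_of_lt (Polynomial.natDegree_sum_le_of_forall_le _ _ fun i _ => ?_)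
              (by omega : dp - 1 < dp)
            exact le_trans (Polynomial.natDegree_C_mul_le _ _)
              (by simpa using Nat.le_sub_one_of_lt i.2)
        exact lt_of_le_of_lt natDegree_map_le h1
      exact absurd (lt_of_le_of_lt hkey hdegle) (lt_irrefl _)
    funext i
    show c i = 0
    rw [← hcoeff i, hrz, Polynomial.coeff_zero]
  -- surjectivity
  have hsum : ∀ x : Matrix (Fin n) (Fin n) R, x ∈ S → ∃ c : Fin dp → R, Ψ c = x := by
    intro x hx
    rw [hS, Algebra.adjoin_singleton_eq_range_aeval] at hx
    obtain ⟨qbar, hq⟩ := hx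
    obtain ⟨q, rfl⟩ := Polynomial.map_surjective σ Ideal.Quotient.mk_surjective qbar
    set r := q %ₘ νj with hrdef
    have hfr : r + νj * (q /ₘ νj) = q := modByMonic_add_div q νj
    have hν0 : Polynomial.aeval Ab (νj.map σ) = 0 :=
      memNullDvd_iff_aeval_eq_zero.1 hνj.2.1
    have hq' : Polynomial.aeval Ab (q.map σ) = x := hq
    have hx2 : Polynomial.aeval Ab (r.map σ) = x := by
      rw [← hq']
      conv_rhs => rw [← hfr]
      rw [Polynomial.map_add, Polynomial.map_mul, map_add, _root_.map_mul, hν0, zero_mul,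
        add_zero]
    rcases eq_or_ne r 0 with h0 | h0
    · exact ⟨0, by rw [hΨapply]; simp [← hx2, h0]⟩
    · have hlt : (r.map σ).natDegree < dp := by
        have h1 : r.natDegree < νj.natDegree :=
          natDegree_lt_natDegree h0 (degree_modByMonic_lt q hνj.1)
        rw [hdeg] at h1
        exact lt_of_le_of_lt natDegree_map_le h1
      refine ⟨fun i => (r.map σ).coeff (i : ℕ), ?_⟩
      rw [hΨapply, ← hx2, aeval_eq_sum_range' hlt]
      rw [← Fin.sum_univ_eq_sum_range (fun i => (r.map σ).coeff i • Ab ^ i) dp]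
  have hbij : Function.Bijective Φ := by
    constructor
    · intro a b hab
      have h1 : Ψ a = Ψ b := by
        have h2 := congrArg Subtype.val hab
        rwa [hΦ, LinearMap.codRestrict_apply, LinearMap.codRestrict_apply] at h2
      exact sub_eq_zero.1 (hker (a - b) (by rw [map_sub, h1, sub_self]))
    · rintro ⟨x, hx⟩
      obtain ⟨c, hc⟩ := hsum x ((Subalgebra.mem_toSubmodule _).1 hx)
      exact ⟨c, Subtype.ext (by rw [hΦ, LinearMap.codRestrict_apply, hc])⟩
  exact ⟨(LinearEquiv.ofBijective Φ hbij).symm⟩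

end PID3

section PID4

variable {D : Type*} [CommRing D] [IsDomain D] [IsPrincipalIdealRing D]
  {p : D} {n : ℕ} {A : Matrix (Fin n) (Fin n) D} {ν1 : Polynomial D}

set_option maxHeartbeats 1000000 in
set_option synthInstance.maxHeartbeats 400000 in
theorem deg_le_of_equiv (hp : Prime p) {j : ℕ} (hj : 1 ≤ j)
    {νj : Polynomial D} (hνj : IsMinPolyMod A (p ^ j) νj)
    (hν1 : IsMinPolyMod A p ν1)
    (e : (Algebra.adjoin (D ⧸ Ideal.span {p ^ j})
        {A.map (Ideal.Quotient.mk (Ideal.span {p ^ j}))})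
      ≃ₗ[D ⧸ Ideal.span {p ^ j}]
        (Fin ν1.natDegree → (D ⧸ Ideal.span {p ^ j}))) :
    νj.natDegree ≤ ν1.natDegree := by
  haveI : Nontrivial (D ⧸ Ideal.span {p ^ j}) := nontrivial_quot hp hj
  haveI : (Ideal.span {p} : Ideal D).IsMaximal :=
    PrincipalIdealRing.isMaximal_of_irreducible hp.irreducible
  letI : Field (D ⧸ Ideal.span {p}) := Ideal.Quotient.field _
  set R := D ⧸ Ideal.span {p ^ j} with hR
  set σ := Ideal.Quotient.mk (Ideal.span {p ^ j}) with hσ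
  set Ab := A.map σ with hAb
  set dp := ν1.natDegree with hdpdef
  have hle : Ideal.span {p ^ j} ≤ (Ideal.span {p} : Ideal D) :=
    Ideal.span_singleton_le_span_singleton.2 (dvd_pow_self p (by omega))
  set τ := Ideal.Quotient.factor hle with hτ
  set xi : ℕ → (Algebra.adjoin R {Ab}) := fun k => ⟨Ab ^ k, pow_mem_adjoin R Ab k⟩ with hxi
  set v : ℕ → (Fin dp → R) := fun k => e (xi k) with hv
  set W : Matrix (Fin dp) (Fin dp) R := Matrix.of fun k i => v (i : ℕ) k with hW
  have hWmul : ∀ c : Fin dp → R, W.mulVec c = e (∑ i : Fin dp, c i • xi (i : ℕ)) := by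
    intro c
    funext k
    rw [map_sum, Finset.sum_apply]
    simp only [Matrix.mulVec, dotProduct, Matrix.of_apply, _root_.map_smul,
      Pi.smul_apply, smul_eq_mul, hW, hv]
    exact Finset.sum_congr rfl fun i _ => mul_comm _ _
  -- the coordinate matrix W has unit determinant
  have hWdet : IsUnit W.det := by
    obtain ⟨x, hx⟩ := Ideal.Quotient.mk_surjective (I := Ideal.span {p ^ j}) W.det
    suffices hnd : ¬ p ∣ x by rw [← hx]; exact isUnit_mk_of_not_dvd hp j hnd
    intro hdvd
    have hdet0 : (W.map τ).det = 0 := by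
      rw [← RingHom.mapMatrix_apply, ← RingHom.map_det, ← hx, hτ, Ideal.Quotient.factor_mk,
        Ideal.Quotient.eq_zero_iff_mem, Ideal.mem_span_singleton]
      exact hdvd
    obtain ⟨c, hc0, hcz⟩ := (Matrix.exists_mulVec_eq_zero_iff).2 hdet0
    obtain ⟨i0, hi0⟩ := Function.ne_iff.1 hc0
    have hdp0 : 0 < dp := by
      rcases Nat.eq_zero_or_pos dp with h0 | h0
      · exact absurd i0.2 (by omega)
      · exact h0
    choose y hy using fun i => Ideal.Quotient.mk_surjective (I := Ideal.span {p}) (c i)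
    set c' : Fin dp → R := fun i => σ (y i) with hc'
    have hτc' : ∀ i, τ (c' i) = c i := fun i => by
      show τ (σ (y i)) = c i
      rw [hτ, hσ, Ideal.Quotient.factor_mk, hy]
    have hu : ∀ k, τ ((W.mulVec c') k) = 0 := by
      intro k
      have h1 : τ ((W.mulVec c') k) = ((W.map τ).mulVec c) k := by
        simp only [Matrix.mulVec, dotProduct, map_sum]
        exact Finset.sum_congr rfl fun i _ => by
          rw [_root_.map_mul, hτc', Matrix.map_apply]
      rw [h1, hcz, Pi.zero_apply]
    have hz : ∀ k, ∃ zk : R, (W.mulVec c') k = σ p * zk := by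
      intro k
      obtain ⟨t, ht⟩ := Ideal.Quotient.mk_surjective (I := Ideal.span {p ^ j})
        ((W.mulVec c') k)
      have h2 : τ (σ t) = 0 := by
        have h2' := hu k
        rw [← ht] at h2'
        exact h2'
      rw [hσ, hτ, Ideal.Quotient.factor_mk, Ideal.Quotient.eq_zero_iff_mem,
        Ideal.mem_span_singleton] at h2
      obtain ⟨t', rfl⟩ := h2
      exact ⟨σ t', by rw [← ht, hσ, _root_.map_mul]⟩
    choose z hzz using hz
    have hsum : (∑ i : Fin dp, c' i • xi (i : ℕ)) = σ p • e.symm z := by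
      apply e.injective
      rw [_root_.map_smul, e.apply_symm_apply, ← hWmul]
      funext k
      rw [hzz k, Pi.smul_apply, Algebra.smul_def]
      rfl
    have hmemadj : (e.symm z : Matrix (Fin n) (Fin n) R) ∈
        (Polynomial.aeval (R := R) Ab).range := by
      rw [← Algebra.adjoin_singleton_eq_range_aeval]
      exact (e.symm z).2
    obtain ⟨qb, hqb0⟩ := hmemadj
    have hqb : Polynomial.aeval Ab qb = (e.symm z : Matrix (Fin n) (Fin n) R) := hqb0
    obtain ⟨q, rfl⟩ := Polynomial.map_surjective σ Ideal.Quotient.mk_surjective qb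
    have hmat : (∑ i : Fin dp, c' i • Ab ^ (i : ℕ))
        = σ p • (Polynomial.aeval Ab (q.map σ)) := by
      have h3 := congrArg Subtype.val hsum
      rw [AddSubmonoidClass.coe_finset_sum] at h3
      simp only [SetLike.val_smul] at h3
      rw [← hqb] at h3
      exact h3
    set rD : Polynomial D :=
      (∑ i : Fin dp, Polynomial.C (y i) * Polynomial.X ^ (i : ℕ)) - Polynomial.C p * q
      with hrD
    have hrmap : rD.map σ =
        (∑ i : Fin dp, Polynomial.C (c' i) * Polynomial.X ^ (i : ℕ))
          - Polynomial.C (σ p) * (q.map σ) := by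
      rw [hrD, Polynomial.map_sub, Polynomial.map_sum, Polynomial.map_mul, Polynomial.map_C]
      congr 1
      exact Finset.sum_congr rfl fun i _ => by
        rw [Polynomial.map_mul, Polynomial.map_C, Polynomial.map_pow, Polynomial.map_X, hc']
    have haeval : Polynomial.aeval Ab (rD.map σ) = 0 := by
      rw [hrmap, map_sub, _root_.map_mul, aeval_C, map_sum]
      have h4 : (∑ i : Fin dp, Polynomial.aeval Ab
          (Polynomial.C (c' i) * Polynomial.X ^ (i : ℕ)))
          = ∑ i : Fin dp, c' i • Ab ^ (i : ℕ) :=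
        Finset.sum_congr rfl fun i _ => by
          rw [_root_.map_mul, aeval_C, map_pow, aeval_X, Algebra.smul_def]
      rw [h4, hmat, Algebra.smul_def, sub_self]
    have hmem1 : memNullDvd A p rD :=
      (memNullDvd_iff_aeval_eq_zero.2 haeval).of_dvd (dvd_pow_self p (by omega))
    have hmodp : rD.map (Ideal.Quotient.mk (Ideal.span {p})) =
        ∑ i : Fin dp, Polynomial.C (c i) * Polynomial.X ^ (i : ℕ) := by
      rw [hrD, Polynomial.map_sub, Polynomial.map_sum, Polynomial.map_mul, Polynomial.map_C]
      have hp0 : Ideal.Quotient.mk (Ideal.span {p}) p = 0 := by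
        rw [Ideal.Quotient.eq_zero_iff_mem]; exact Ideal.subset_span rfl
      rw [hp0, Polynomial.C_0, zero_mul, sub_zero]
      exact Finset.sum_congr rfl fun i _ => by
        rw [Polynomial.map_mul, Polynomial.map_C, Polynomial.map_pow, Polynomial.map_X, hy]
    have hcoeff : (rD.map (Ideal.Quotient.mk (Ideal.span {p}))).coeff (i0 : ℕ) = c i0 := by
      rw [hmodp, Polynomial.finset_sum_coeff, Finset.sum_eq_single i0]
      · simp
      · intro b _ hbi
        rw [Polynomial.coeff_C_mul, Polynomial.coeff_X_pow, if_neg (by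
          simpa [Fin.val_eq_val] using Ne.symm hbi), mul_zero]
      · simp
    have hne : rD.map (Ideal.Quotient.mk (Ideal.span {p})) ≠ 0 := fun h0 => by
      rw [h0, Polynomial.coeff_zero] at hcoeff
      exact hi0 hcoeff.symm
    have hkey := deg_ge_of_mod_p hp hν1 rD hmem1 hne
    have hsmall : (rD.map (Ideal.Quotient.mk (Ideal.span {p}))).natDegree < dp := by
      rw [hmodp]
      refine lt_of_le_of_lt (Polynomial.natDegree_sum_le_of_forall_le _ _ fun i _ => ?_)
        (by omega : dp - 1 < dp)
      exact le_trans (Polynomial.natDegree_C_mul_le _ _)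
        (by simpa using Nat.le_sub_one_of_lt i.2)
    exact absurd (lt_of_le_of_lt hkey hsmall) (lt_irrefl _)
  -- use invertibility to express Ab ^ dp
  have hWinv : W * W⁻¹ = 1 := Matrix.mul_nonsing_inv W hWdet
  set c : Fin dp → R := W⁻¹.mulVec (v dp) with hc
  have h5 : W.mulVec c = v dp := by
    rw [hc, Matrix.mulVec_mulVec, hWinv, Matrix.one_mulVec]
  have h6 : (∑ i : Fin dp, c i • xi (i : ℕ)) = xi dp := by
    apply e.injective
    rw [← hWmul, h5, hv]
  have hval : (∑ i : Fin dp, c i • Ab ^ (i : ℕ)) = Ab ^ dp := by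
    have h7 := congrArg Subtype.val h6
    rw [AddSubmonoidClass.coe_finset_sum] at h7
    simpa only [SetLike.val_smul] using h7
  set gb : Polynomial R :=
    Polynomial.X ^ dp - ∑ i : Fin dp, Polynomial.C (c i) * Polynomial.X ^ (i : ℕ) with hgb
  have hgbmonic : gb.Monic := by
    refine Polynomial.monic_X_pow_sub ?_
    refine lt_of_le_of_lt (Polynomial.degree_sum_le _ _)
      ((Finset.sup_lt_iff (WithBot.bot_lt_coe dp)).2 fun i _ => ?_)
    calc (Polynomial.C (c i) * Polynomial.X ^ (i : ℕ)).degree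
        ≤ (Polynomial.C (c i)).degree + (Polynomial.X ^ (i : ℕ) : Polynomial R).degree :=
          Polynomial.degree_mul_le _ _
      _ ≤ 0 + ((i : ℕ) : WithBot ℕ) :=
          add_le_add Polynomial.degree_C_le (le_of_eq (Polynomial.degree_X_pow _))
      _ = ((i : ℕ) : WithBot ℕ) := zero_add _
      _ < (dp : WithBot ℕ) := by exact_mod_cast i.2
  have haeval2 : Polynomial.aeval Ab gb = 0 := by
    rw [hgb, map_sub, map_pow, aeval_X, map_sum]
    have h9 : (∑ i : Fin dp, Polynomial.aeval Ab (Polynomial.C (c i) * Polynomial.X ^ (i : ℕ)))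
        = ∑ i : Fin dp, c i • Ab ^ (i : ℕ) :=
      Finset.sum_congr rfl fun i _ => by
        rw [_root_.map_mul, aeval_C, map_pow, aeval_X, Algebra.smul_def]
    rw [h9, hval, sub_self]
  have hliftgb : gb ∈ Polynomial.lifts σ := by
    obtain ⟨g0, hg0⟩ := Polynomial.map_surjective σ Ideal.Quotient.mk_surjective gb
    exact ⟨g0, hg0⟩
  obtain ⟨g, hgmap, hgdeg, hgmonic⟩ := Polynomial.lifts_and_degree_eq_and_monic hliftgb hgbmonic
  have hgmem : memNullDvd A (p ^ j) g := by
    rw [memNullDvd_iff_aeval_eq_zero]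
    show Polynomial.aeval Ab (g.map σ) = 0
    rw [hgmap]
    exact haeval2
  have hd1 : νj.natDegree ≤ g.natDegree :=
    natDegree_le_natDegree (hνj.2.2 g hgmonic hgmem)
  have hd2 : g.natDegree = gb.natDegree := natDegree_eq_of_degree_eq hgdeg
  have hd3 : gb.natDegree ≤ dp := by
    rw [hgb]
    refine le_trans (Polynomial.natDegree_sub_le _ _) (max_le ?_ ?_)
    · rw [Polynomial.natDegree_X_pow]
    · exact Polynomial.natDegree_sum_le_of_forall_le _ _ fun i _ =>
        le_trans (Polynomial.natDegree_C_mul_le _ _)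
          (by rw [Polynomial.natDegree_X_pow]; omega)
  omega

end PID4

/-- Let `p ∈ D` be prime, `A` a matrix over `D`, `ℓ ∈ ℕ` with `ℓ ≥ 1`,
`ν_j` `(p^j)`-minimal polynomials of `A` for `1 ≤ j ≤ ℓ`, `Ā_j` the image of `A` over
`D/(p^j)` and `d_p` the `p`-degree of `A`. The following are equivalent:
(1) `N_{(p^ℓ)}(A) = ν_ℓ·D[X] + p^ℓ·D[X]`;
(2) `N_{(p^j)}(A) = ν_j·D[X] + p^j·D[X]` for all `1 ≤ j ≤ ℓ`;
(3) `(D/(p^j))[Ā_j] ≅ (D/(p^j))^{d_p}` as `D/(p^j)`-modules for all `1 ≤ j ≤ ℓ`;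
(4) `deg ν_ℓ = d_p`;
(5) `ν_ℓ` is a `(p^j)`-minimal polynomial of `A` for all `1 ≤ j ≤ ℓ`. -/
theorem stmt14 {D : Type*} [CommRing D] [IsDomain D] [IsPrincipalIdealRing D]
    (p : D) (hp : Prime p) (ℓ : ℕ) (hℓ : 1 ≤ ℓ)
    {n : ℕ} (A : Matrix (Fin n) (Fin n) D)
    (ν : ℕ → Polynomial D) (hν : ∀ j, 1 ≤ j → j ≤ ℓ → IsMinPolyMod A (p ^ j) (ν j))
    (dp : ℕ) (hdp : dp = (ν 1).natDegree) :
    [ (∀ f : Polynomial D, memNullDvd A (p ^ ℓ) f ↔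
        ∃ g h : Polynomial D, f = ν ℓ * g + Polynomial.C (p ^ ℓ) * h),
      (∀ j, 1 ≤ j → j ≤ ℓ → ∀ f : Polynomial D, memNullDvd A (p ^ j) f ↔
        ∃ g h : Polynomial D, f = ν j * g + Polynomial.C (p ^ j) * h),
      (∀ j, 1 ≤ j → j ≤ ℓ →
        Nonempty (
          (Algebra.adjoin (D ⧸ Ideal.span {p ^ j})
              {A.map (Ideal.Quotient.mk (Ideal.span {p ^ j}))})
            ≃ₗ[D ⧸ Ideal.span {p ^ j}] (Fin dp → (D ⧸ Ideal.span {p ^ j})))),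
      ((ν ℓ).natDegree = dp),
      (∀ j, 1 ≤ j → j ≤ ℓ → IsMinPolyMod A (p ^ j) (ν ℓ))
    ].TFAE := by
  subst hdp
  have hν1 : IsMinPolyMod A (p ^ 1) (ν 1) := hν 1 le_rfl hℓ
  have hν1' : IsMinPolyMod A p (ν 1) := by rwa [pow_one] at hν1
  have hνℓ := hν ℓ hℓ le_rfl
  have hge : ∀ j, 1 ≤ j → j ≤ ℓ → (ν 1).natDegree ≤ (ν j).natDegree := by
    intro j hj1 hjℓ
    exact natDegree_le_natDegree (hν1'.2.2 (ν j) (hν j hj1 hjℓ).1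
      ((hν j hj1 hjℓ).2.1.of_dvd (dvd_pow_self p (by omega))))
  have hcp : p ^ (ℓ - 1) * p = p ^ ℓ := by rw [← pow_succ, Nat.sub_add_cancel hℓ]
  tfae_have 1 → 4 := by
    intro h1
    refine le_antisymm ?_ (hge ℓ hℓ le_rfl)
    have hmem : memNullDvd A (p ^ ℓ) (Polynomial.C (p ^ (ℓ - 1)) * ν 1) := by
      obtain ⟨B, hB⟩ := hν1'.2.1
      refine ⟨B, ?_⟩
      rw [_root_.map_mul, aeval_C, hB, Algebra.smul_def, Algebra.smul_def, ← mul_assoc,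
        ← _root_.map_mul, hcp, ← Algebra.smul_def]
    obtain ⟨g, h, heq⟩ := (h1 _).1 hmem
    set σℓ := Ideal.Quotient.mk (Ideal.span {p ^ ℓ}) with hσℓ
    haveI : Nontrivial (D ⧸ Ideal.span {p ^ ℓ}) := nontrivial_quot hp hℓ
    have hmapeq := congrArg (Polynomial.map σℓ) heq
    simp only [Polynomial.map_add, Polynomial.map_mul, Polynomial.map_C] at hmapeq
    have hz : σℓ (p ^ ℓ) = 0 := by
      rw [hσℓ, Ideal.Quotient.eq_zero_iff_mem]; exact Ideal.subset_span rfl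
    rw [hz, Polynomial.C_0, zero_mul, add_zero] at hmapeq
    have hc0 : σℓ (p ^ (ℓ - 1)) ≠ 0 := by
      rw [hσℓ, Ne, Ideal.Quotient.eq_zero_iff_mem, Ideal.mem_span_singleton]
      intro hdvd
      have h2 : p ^ (ℓ - 1) * p ∣ p ^ (ℓ - 1) * 1 := by rw [mul_one, hcp]; exact hdvd
      exact hp.not_isUnit (isUnit_of_dvd_one
        ((mul_dvd_mul_iff_left (pow_ne_zero _ hp.ne_zero)).1 h2))
    have hlhs_ne : Polynomial.C (σℓ (p ^ (ℓ - 1))) * (ν 1).map σℓ ≠ 0 := by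
      intro h0
      have hcoeff : (Polynomial.C (σℓ (p ^ (ℓ - 1))) * (ν 1).map σℓ).coeff
          ((ν 1).natDegree) = σℓ (p ^ (ℓ - 1)) := by
        rw [Polynomial.coeff_C_mul]
        have h3 : ((ν 1).map σℓ).coeff ((ν 1).natDegree) = 1 := by
          rw [← Polynomial.Monic.natDegree_map (hν1'.1) σℓ]
          exact ((hν1'.1).map σℓ).coeff_natDegree
        rw [h3, mul_one]
      rw [h0, Polynomial.coeff_zero] at hcoeff
      exact hc0 hcoeff.symm
    have hgne : g.map σℓ ≠ 0 := by
      intro h0; rw [h0, mul_zero] at hmapeq; exact hlhs_ne hmapeq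
    have hdegeq : ((ν ℓ).map σℓ * g.map σℓ).natDegree
        = ((ν ℓ).map σℓ).natDegree + (g.map σℓ).natDegree := by
      refine Polynomial.natDegree_mul' ?_
      rw [Polynomial.Monic.leadingCoeff ((hνℓ.1).map σℓ), one_mul]
      exact Polynomial.leadingCoeff_ne_zero.2 hgne
    have hup : (Polynomial.C (σℓ (p ^ (ℓ - 1))) * (ν 1).map σℓ).natDegree
        ≤ (ν 1).natDegree :=
      le_trans (Polynomial.natDegree_C_mul_le _ _) natDegree_map_le
    rw [hmapeq, hdegeq] at hup
    have hνℓmap : ((ν ℓ).map σℓ).natDegree = (ν ℓ).natDegree :=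
      Polynomial.Monic.natDegree_map hνℓ.1 σℓ
    omega
  tfae_have 4 → 5 := by
    intro h4 j hj1 hjℓ
    refine ⟨hνℓ.1, hνℓ.2.1.of_dvd (pow_dvd_pow p hjℓ), ?_⟩
    intro g hg hgmem
    have hdeg1 : (ν ℓ).degree = (ν 1).degree := by
      rw [Polynomial.degree_eq_natDegree hνℓ.1.ne_zero,
        Polynomial.degree_eq_natDegree hν1'.1.ne_zero, h4]
    calc (ν ℓ).degree = (ν 1).degree := hdeg1
      _ ≤ g.degree := hν1'.2.2 g hg (hgmem.of_dvd (dvd_pow_self p (by omega)))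
  tfae_have 5 → 2 := by
    intro h5 j hj1 hjℓ
    have hminj := h5 j hj1 hjℓ
    have hmin1 := h5 1 le_rfl hℓ
    rw [pow_one] at hmin1
    have hd1 : (ν ℓ).degree = (ν 1).degree :=
      le_antisymm (hmin1.2.2 _ hν1'.1 hν1'.2.1) (hν1'.2.2 _ hmin1.1 hmin1.2.1)
    have hdj : (ν j).degree = (ν ℓ).degree :=
      le_antisymm ((hν j hj1 hjℓ).2.2 _ hminj.1 hminj.2.1)
        (hminj.2.2 _ (hν j hj1 hjℓ).1 (hν j hj1 hjℓ).2.1)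
    exact null_eq_of_deg hp hν1' hj1 (hν j hj1 hjℓ)
      (natDegree_eq_of_degree_eq (hdj.trans hd1))
  tfae_have 2 → 1 := fun h2 => h2 ℓ hℓ le_rfl
  tfae_have 4 → 3 := by
    intro h4 j hj1 hjℓ
    have h2 : (ν j).natDegree ≤ (ν ℓ).natDegree :=
      natDegree_le_natDegree ((hν j hj1 hjℓ).2.2 _ hνℓ.1
        (hνℓ.2.1.of_dvd (pow_dvd_pow p hjℓ)))
    have hnd : (ν j).natDegree = (ν 1).natDegree := by
      have := hge j hj1 hjℓ
      omega
    exact equiv_of_deg hp hj1 (hν j hj1 hjℓ) hν1' hnd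
  tfae_have 3 → 4 := by
    intro h3
    obtain ⟨e⟩ := h3 ℓ hℓ le_rfl
    exact le_antisymm (deg_le_of_equiv hp hℓ hνℓ hν1' e) (hge ℓ hℓ le_rfl)
  tfae_finish
end
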